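/- Let r ≥ 1, let μ be a probability measure on a compact Polish space X, and suppose μ = Σ_{i=1}^r λ_i μ^{(i)} for probability measures μ^{(1)},…,μ^{(r)} on X and strictly positive weights λ ∈ Δ_r^*. Then for any sequence (μ_n)_{n≥0} of probability measures on X converging weakly to μ, there exist, for each i ∈ {1,…,r}, sequences (μ_n^{(i)})_{n≥0} of nonnegative finite measures on X such that μ_n^{(i)} converges weakly to λ_i μ^{(i)} for every i, and Σ_{i=1}^r μ_n^{(i)} = μ_n for every n ≥ 0. -/

import Mathlib

open MeasureTheory Filter
open scoped ENNReal NNReal BigOperators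

noncomputable section

section AuxLemmas

lemma exists_strictMono_ge_aux19 (M : ℕ → ℕ) : ∃ N : ℕ → ℕ, StrictMono N ∧ ∀ k, M k ≤ N k := by
  refine ⟨fun k => Nat.rec (motive := fun _ => ℕ) (M 0) (fun k ih => max (M (k + 1)) (ih + 1)) k,
    strictMono_nat_of_lt_succ fun k => lt_of_lt_of_le (Nat.lt_succ_self _) (le_max_right _ _),
    fun k => ?_⟩
  cases k with
  | zero => exact le_refl _
  | succ k => exact le_max_left _ _

/-- Diagonal extraction in a pseudometric space. -/
lemma diag_aux19 {α : Type*} [PseudoMetricSpace α] (a : ℕ → ℕ → α) (b : ℕ → α) (c : α)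
    (h1 : ∀ k, Tendsto (a k) atTop (nhds (b k))) (h2 : Tendsto b atTop (nhds c)) :
    ∃ φ : ℕ → ℕ, Tendsto φ atTop atTop ∧ Tendsto (fun n => a (φ n) n) atTop (nhds c) := by
  classical
  have hM : ∀ k : ℕ, ∃ M : ℕ, ∀ n ≥ M, dist (a k n) (b k) < 1 / (k + 1) := fun k =>
    (Metric.tendsto_atTop.mp (h1 k)) (1 / (k + 1)) (by positivity)
  choose M hMspec using hM
  obtain ⟨N, hNmono, hNM⟩ := exists_strictMono_ge_aux19 M
  have hNk : ∀ k, k ≤ N k := fun k => hNmono.le_apply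
  set φ : ℕ → ℕ := fun n => Nat.findGreatest (fun k => N k ≤ n) n with hφ
  have hφ_big : ∀ K n, N K ≤ n → K ≤ φ n :=
    fun K n h => Nat.le_findGreatest (le_trans (hNk K) h) h
  have hφ_tendsto : Tendsto φ atTop atTop := by
    refine tendsto_atTop.mpr fun K => ?_
    filter_upwards [eventually_ge_atTop (N K)] with n hn
    exact hφ_big K n hn
  refine ⟨φ, hφ_tendsto, ?_⟩
  have hφ_spec : ∀ n, N 0 ≤ n → N (φ n) ≤ n := fun n hn =>
    Nat.findGreatest_spec (P := fun k => N k ≤ n) (m := 0) (Nat.zero_le n) hn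
  rw [tendsto_iff_dist_tendsto_zero]
  have hbound : ∀ᶠ n in atTop, dist (a (φ n) n) c ≤ 1 / (φ n + 1) + dist (b (φ n)) c := by
    filter_upwards [eventually_ge_atTop (N 0)] with n hn
    calc dist (a (φ n) n) c ≤ dist (a (φ n) n) (b (φ n)) + dist (b (φ n)) c := dist_triangle _ _ _
    _ ≤ 1 / (φ n + 1) + dist (b (φ n)) c := by
        have := hMspec (φ n) n (le_trans (hNM _) (hφ_spec n hn))
        linarith [this]
  have hlim : Tendsto (fun n => 1 / ((φ n : ℝ) + 1) + dist (b (φ n)) c) atTop (nhds 0) := by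
    have l1 : Tendsto (fun n => 1 / ((φ n : ℝ) + 1)) atTop (nhds 0) :=
      (tendsto_one_div_add_atTop_nhds_zero_nat).comp hφ_tendsto
    have l2 : Tendsto (fun n => dist (b (φ n)) c) atTop (nhds 0) :=
      ((tendsto_iff_dist_tendsto_zero.mp h2)).comp hφ_tendsto
    simpa using l1.add l2
  exact squeeze_zero' (by filter_upwards with n using dist_nonneg) hbound hlim

lemma integral_dist_le_aux19 {X : Type*} [MetricSpace X] [CompactSpace X] [MeasurableSpace X]
    [BorelSpace X] (σ : Measure X) [IsFiniteMeasure σ] (hσ : σ Set.univ ≤ 1) (f g : C(X, ℝ)) :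
    |∫ x, f x ∂σ - ∫ x, g x ∂σ| ≤ dist f g := by
  have hf : Integrable f σ := (BoundedContinuousFunction.mkOfCompact f).integrable σ
  have hg : Integrable g σ := (BoundedContinuousFunction.mkOfCompact g).integrable σ
  rw [← integral_sub hf hg]
  have habs : |∫ x, (f x - g x) ∂σ| ≤ ∫ x, |f x - g x| ∂σ := by
    simpa [Real.norm_eq_abs] using
      norm_integral_le_integral_norm (μ := σ) (fun x => f x - g x)
  calc |∫ x, (f x - g x) ∂σ| ≤ ∫ x, |f x - g x| ∂σ := habs
  _ ≤ ∫ _x, dist f g ∂σ := by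
      refine integral_mono (hf.sub hg).abs (integrable_const _) fun x => ?_
      simpa [Real.dist_eq] using ContinuousMap.dist_apply_le_dist (f := f) (g := g) x
  _ = (σ Set.univ).toReal * dist f g := by rw [integral_const]; simp [smul_eq_mul, Measure.real]
  _ ≤ 1 * dist f g := by
      apply mul_le_mul_of_nonneg_right _ dist_nonneg
      exact ENNReal.toReal_le_of_le_ofReal zero_le_one (by simpa using hσ)
  _ = dist f g := one_mul _

/-- Extension of weak convergence from a dense set of test functions, for sub-probability
measures. -/
lemma dense_ext_aux19 {X : Type*} [MetricSpace X] [CompactSpace X] [MeasurableSpace X]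
    [BorelSpace X]
    (σn : ℕ → Measure X) (hfin : ∀ n, IsFiniteMeasure (σn n)) (hmass : ∀ n, σn n Set.univ ≤ 1)
    (σ : Measure X) [IsFiniteMeasure σ] (hm : σ Set.univ ≤ 1)
    (D : Set C(X, ℝ)) (hD : Dense D)
    (h : ∀ g ∈ D, Tendsto (fun n => ∫ x, g x ∂σn n) atTop (nhds (∫ x, g x ∂σ)))
    (f : C(X, ℝ)) : Tendsto (fun n => ∫ x, f x ∂σn n) atTop (nhds (∫ x, f x ∂σ)) := by
  haveI := hfin
  rw [Metric.tendsto_atTop]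
  intro ε hε
  obtain ⟨g, hgD, hfg⟩ : ∃ g ∈ D, dist f g < ε / 4 := by
    have := Metric.mem_closure_iff.mp (hD.closure_eq ▸ Set.mem_univ f) (ε / 4) (by positivity)
    obtain ⟨g, hg1, hg2⟩ := this
    exact ⟨g, hg1, hg2⟩
  obtain ⟨N, hN⟩ := (Metric.tendsto_atTop.mp (h g hgD)) (ε / 4) (by positivity)
  refine ⟨N, fun n hn => ?_⟩
  have h1 := integral_dist_le_aux19 (σn n) (hmass n) f g
  have h2 := integral_dist_le_aux19 σ hm f g
  have h3 := hN n hn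
  rw [Real.dist_eq] at h3 ⊢
  have heq : ∫ x, f x ∂σn n - ∫ x, f x ∂σ =
      (∫ x, f x ∂σn n - ∫ x, g x ∂σn n) + (∫ x, g x ∂σn n - ∫ x, g x ∂σ)
      + (∫ x, g x ∂σ - ∫ x, f x ∂σ) := by ring
  rw [heq]
  have habs3 := abs_add_three (∫ x, f x ∂σn n - ∫ x, g x ∂σn n) (∫ x, g x ∂σn n - ∫ x, g x ∂σ)
      (∫ x, g x ∂σ - ∫ x, f x ∂σ)
  have h2' : |∫ x, g x ∂σ - ∫ x, f x ∂σ| ≤ dist f g := by rw [abs_sub_comm]; exact h2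
  linarith

lemma exists_continuous_L1_approx_aux19 {X : Type*} [MetricSpace X] [CompactSpace X]
    [MeasurableSpace X] [BorelSpace X]
    (μ : Measure X) [IsFiniteMeasure μ] (g : X → ℝ) (hg : Integrable g μ)
    (δ : ℝ) (hδ : 0 < δ) : ∃ c : C(X, ℝ), ∫ x, |c x - g x| ∂μ < δ := by
  have hmem : MemLp g 1 μ := memLp_one_iff_integrable.mpr hg
  set G : Lp ℝ 1 μ := hmem.toLp g with hG
  have hdr := ContinuousMap.toLp_denseRange (E := ℝ) μ ℝ (ENNReal.one_ne_top)
  obtain ⟨c, hc⟩ := Metric.denseRange_iff.mp hdr G δ hδ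
  refine ⟨c, ?_⟩
  have heq : ∫ x, |c x - g x| ∂μ = ‖ContinuousMap.toLp (E := ℝ) 1 μ ℝ c - G‖ := by
    rw [MeasureTheory.L1.norm_eq_integral_norm]
    refine integral_congr_ae ?_
    filter_upwards [Lp.coeFn_sub (ContinuousMap.toLp (E := ℝ) 1 μ ℝ c) G,
      ContinuousMap.coeFn_toLp (p := 1) (μ := μ) (𝕜 := ℝ) c, hmem.coeFn_toLp] with x h1 h2 h3
    rw [h1]; simp only [Pi.sub_apply, h2, hG, h3, Real.norm_eq_abs]
  rw [heq, ← dist_eq_norm]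
  rw [dist_comm]
  exact hc

lemma clamp_abs_le_aux19 (s t : ℝ) (h0 : 0 ≤ t) (h1 : t ≤ 1) :
    |max 0 (min s 1) - t| ≤ |s - t| := by
  rcases le_total s 0 with hs | hs
  · rw [min_eq_left (le_trans hs zero_le_one), max_eq_left hs]
    rw [abs_of_nonpos (by linarith), abs_of_nonpos (by linarith)]
    linarith
  · rcases le_total 1 s with hs1 | hs1
    · rw [min_eq_right hs1, max_eq_right zero_le_one]
      rw [abs_of_nonneg (by linarith), abs_of_nonneg (by linarith)]
      linarith
    · rw [min_eq_left hs1, max_eq_right hs]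

/-- A nonnegative a.e.-partition of unity in `L¹` can be approximated in `L¹` by a continuous
family which is pointwise nonnegative with sum at most one. -/
lemma approx_family_aux19 {X : Type*} [MetricSpace X] [CompactSpace X]
    [MeasurableSpace X] [BorelSpace X]
    (μ : Measure X) [IsProbabilityMeasure μ] (r : ℕ) (g : Fin r → X → ℝ)
    (hint : ∀ i, Integrable (g i) μ)
    (hg0 : ∀ i x, 0 ≤ g i x)
    (hae : ∀ᵐ x ∂μ, (∀ i, g i x ≤ 1) ∧ ∑ i, g i x = 1)
    (ε : ℝ) (hε : 0 < ε) :
    ∃ h : Fin r → C(X, ℝ), (∀ i x, 0 ≤ h i x) ∧ (∀ x, ∑ i, h i x ≤ 1) ∧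
      (∀ i, ∫ x, |h i x - g i x| ∂μ ≤ ε) := by
  set δ : ℝ := ε / (r + 1) with hδdef
  have hδ : 0 < δ := by positivity
  have hc : ∀ i : Fin r, ∃ c : C(X, ℝ), ∫ x, |c x - g i x| ∂μ < δ := fun i =>
    exists_continuous_L1_approx_aux19 μ (g i) (hint i) δ hδ
  choose c hcspec using hc
  -- clamp to [0,1]
  set b : Fin r → C(X, ℝ) := fun i =>
    ⟨fun x => max 0 (min (c i x) 1), by
      exact continuous_const.max ((c i).continuous.min continuous_const)⟩ with hbdef
  have hb0 : ∀ i x, 0 ≤ b i x := fun i x => le_max_left _ _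
  have hb1 : ∀ i x, b i x ≤ 1 := fun i x =>
    max_le zero_le_one (min_le_right _ _)
  have hbg : ∀ᵐ x ∂μ, ∀ i, |b i x - g i x| ≤ |c i x - g i x| := by
    filter_upwards [hae] with x hx i
    exact clamp_abs_le_aux19 (c i x) (g i x) (hg0 i x) (hx.1 i)
  -- normalize so that the sum is at most 1
  have hMpos : ∀ x : X, (0:ℝ) < max 1 (∑ j, b j x) := fun x =>
    lt_of_lt_of_le one_pos (le_max_left _ _)
  set h : Fin r → C(X, ℝ) := fun i =>
    ⟨fun x => b i x / max 1 (∑ j, b j x), by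
      refine ((b i).continuous).div (continuous_const.max ?_) (fun x => (hMpos x).ne')
      exact continuous_finset_sum _ fun j _ => (b j).continuous⟩ with hhdef
  have hh0 : ∀ i x, 0 ≤ h i x := fun i x => div_nonneg (hb0 i x) (hMpos x).le
  have hhsum : ∀ x, ∑ i, h i x ≤ 1 := by
    intro x
    have : ∑ i, h i x = (∑ i, b i x) / max 1 (∑ j, b j x) := by
      simp [hhdef, Finset.sum_div]
    rw [this, div_le_one (hMpos x)]
    exact le_max_right _ _
  refine ⟨h, hh0, hhsum, fun i => ?_⟩
  -- pointwise a.e. bound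
  have hptwise : ∀ᵐ x ∂μ, |h i x - g i x| ≤ (∑ j, |c j x - g j x|) + |c i x - g i x| := by
    filter_upwards [hae, hbg] with x hx hbgx
    set M : ℝ := max 1 (∑ j, b j x) with hMdef
    have hM1 : (1:ℝ) ≤ M := le_max_left _ _
    have hM0 : (0:ℝ) < M := lt_of_lt_of_le one_pos hM1
    have hhb : h i x = b i x / M := rfl
    have hble : b i x / M ≤ b i x := by
      rw [div_le_iff₀ hM0]
      exact le_mul_of_one_le_right (hb0 i x) hM1
    have hdivle : b i x / M ≤ 1 := by
      rw [div_le_one hM0]; exact le_trans (hb1 i x) hM1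
    have hdiv0 : 0 ≤ b i x / M := div_nonneg (hb0 i x) hM0.le
    have hstep1 : |h i x - b i x| ≤ M - 1 := by
      have habs : |h i x - b i x| = b i x - b i x / M := by
        rw [hhb, abs_of_nonpos (by linarith)]; ring
      have hfact : b i x - b i x / M = (b i x / M) * (M - 1) := by
        field_simp
      rw [habs, hfact]
      nlinarith
    have hstep2 : M - 1 ≤ ∑ j, |c j x - g j x| := by
      have hsumnn : (0:ℝ) ≤ ∑ j, |c j x - g j x| :=
        Finset.sum_nonneg fun j _ => abs_nonneg _
      rcases max_cases (1:ℝ) (∑ j, b j x) with ⟨hM, _⟩ | ⟨hM, hlt⟩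
      · rw [hMdef, hM]; linarith
      · rw [hMdef, hM]
        have heq : (∑ j, b j x) - 1 = ∑ j, (b j x - g j x) := by
          rw [Finset.sum_sub_distrib, hx.2]
        rw [heq]
        exact Finset.sum_le_sum fun j _ => le_trans (le_abs_self _) (hbgx j)
    have htri : |h i x - g i x| ≤ |h i x - b i x| + |b i x - g i x| := abs_sub_le _ _ _
    have := add_le_add (le_trans hstep1 hstep2) (hbgx i)
    linarith
  -- integrate the pointwise bound
  have hintc : ∀ j, Integrable (fun x => |c j x - g j x|) μ := fun j =>
    (((BoundedContinuousFunction.mkOfCompact (c j)).integrable μ).sub (hint j)).abs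
  have hintlhs : Integrable (fun x => |h i x - g i x|) μ :=
    (((BoundedContinuousFunction.mkOfCompact (h i)).integrable μ).sub (hint i)).abs
  have hintrhs : Integrable (fun x => (∑ j, |c j x - g j x|) + |c i x - g i x|) μ :=
    (integrable_finset_sum _ fun j _ => hintc j).add (hintc i)
  calc ∫ x, |h i x - g i x| ∂μ ≤ ∫ x, ((∑ j, |c j x - g j x|) + |c i x - g i x|) ∂μ :=
        integral_mono_ae hintlhs hintrhs hptwise
  _ = (∑ j, ∫ x, |c j x - g j x| ∂μ) + ∫ x, |c i x - g i x| ∂μ := by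
      rw [integral_add (integrable_finset_sum _ fun j _ => hintc j) (hintc i),
        integral_finset_sum _ fun j _ => hintc j]
  _ ≤ (∑ _j : Fin r, δ) + δ := by
      refine add_le_add (Finset.sum_le_sum fun j _ => (hcspec j).le) (hcspec i).le
  _ = r * δ + δ := by simp [Finset.sum_const]
  _ = ε := by rw [hδdef]; field_simp

lemma withDensity_finset_sum_aux19 {α ι : Type*} [MeasurableSpace α] (μ : Measure α)
    (s : Finset ι) (f : ι → α → ℝ≥0∞) (hf : ∀ i, Measurable (f i)) :
    μ.withDensity (fun x => ∑ i ∈ s, f i x) = ∑ i ∈ s, μ.withDensity (f i) := by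
  classical
  induction s using Finset.induction with
  | empty => simp
  | insert a s hnot ih =>
      simp only [Finset.sum_insert hnot]
      rw [show (fun x => f a x + ∑ i ∈ s, f i x) = (f a + fun x => ∑ i ∈ s, f i x) from rfl,
        withDensity_add_left (hf a), ih]

end AuxLemmas

/-- If `μ = Σ_{i=1}^r λ_i μ^{(i)}` with strictly positive weights and
`μ_n → μ` weakly, then each `μ_n` can be decomposed as `μ_n = Σ_{i=1}^r μ_n^{(i)}` into
nonnegative finite measures with `μ_n^{(i)} → λ_i μ^{(i)}` weakly for every `i`. -/
theorem decomposition_of_weak_limit {X : Type*}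
    [MetricSpace X] [CompactSpace X] [Nonempty X] [MeasurableSpace X] [BorelSpace X]
    (r : ℕ) (hr : 1 ≤ r)
    (μ : Measure X) [IsProbabilityMeasure μ]
    (lam : Fin r → ℝ≥0) (hlam_pos : ∀ i, 0 < lam i) (hlam_sum : ∑ i, lam i = 1)
    (μs : Fin r → Measure X) (hμs : ∀ i, IsProbabilityMeasure (μs i))
    (hdecomp : μ = ∑ i, lam i • μs i)
    (μn : ℕ → Measure X) (hμn : ∀ n, IsProbabilityMeasure (μn n))
    (hconv : ∀ f : C(X, ℝ),
      Tendsto (fun n => ∫ x, f x ∂(μn n)) atTop (nhds (∫ x, f x ∂μ))) :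
    ∃ ν : Fin r → ℕ → Measure X,
      (∀ i n, IsFiniteMeasure (ν i n)) ∧
      (∀ i, ∀ f : C(X, ℝ),
        Tendsto (fun n => ∫ x, f x ∂(ν i n)) atTop (nhds (∫ x, f x ∂(lam i • μs i)))) ∧
      (∀ n, ∑ i, ν i n = μn n) := by
  classical
  haveI := hμn
  haveI := hμs
  -- basic facts about the decomposition
  have hle : ∀ i, lam i • μs i ≤ μ := by
    intro i
    refine Measure.le_iff'.mpr fun s => ?_
    rw [hdecomp, Measure.finset_sum_apply]
    exact Finset.single_le_sum (f := fun j => (lam j • μs j) s) (fun j _ => zero_le)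
      (Finset.mem_univ i)
  have hac : ∀ i, lam i • μs i ≪ μ := fun i => (hle i).absolutelyContinuous
  set G : Fin r → X → ℝ≥0∞ := fun i => (lam i • μs i).rnDeriv μ with hGdef
  have hGmeas : ∀ i, Measurable (G i) := fun i => Measure.measurable_rnDeriv _ _
  have hwd : ∀ i, μ.withDensity (G i) = lam i • μs i := fun i =>
    Measure.withDensity_rnDeriv_eq _ _ (hac i)
  have hWD : μ.withDensity (fun x => ∑ i, G i x) = μ := by
    rw [withDensity_finset_sum_aux19 μ Finset.univ G hGmeas]
    simp_rw [hwd]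
    exact hdecomp.symm
  have hGsum1 : (fun x => ∑ i, G i x) =ᵐ[μ] fun _ => 1 := by
    have h1 : (fun x => ∑ i, G i x) =ᵐ[μ] μ.rnDeriv μ :=
      Measure.eq_rnDeriv (Finset.measurable_sum _ fun i _ => hGmeas i)
        Measure.MutuallySingular.zero_left (by rw [zero_add, hWD])
    exact h1.trans (Measure.rnDeriv_self μ)
  set g : Fin r → X → ℝ := fun i x => (G i x).toReal with hgdef
  have hg0 : ∀ i x, 0 ≤ g i x := fun i x => ENNReal.toReal_nonneg
  have hgint : ∀ i, Integrable (g i) μ := fun i => Measure.integrable_toReal_rnDeriv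
  have hae : ∀ᵐ x ∂μ, (∀ i, g i x ≤ 1) ∧ ∑ i, g i x = 1 := by
    filter_upwards [hGsum1] with x hx
    have hle1 : ∀ i, G i x ≤ 1 := by
      intro i
      calc G i x ≤ ∑ j, G j x :=
            Finset.single_le_sum (f := fun j => G j x) (fun j _ => zero_le) (Finset.mem_univ i)
      _ = 1 := hx
    have hfin : ∀ i, G i x ≠ ∞ := fun i => ne_top_of_le_ne_top ENNReal.one_ne_top (hle1 i)
    constructor
    · intro i
      simpa using ENNReal.toReal_mono ENNReal.one_ne_top (hle1 i)
    · rw [hgdef]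
      rw [← ENNReal.toReal_sum (fun i _ => hfin i), hx]
      simp
  have hkey : ∀ (i : Fin r) (f : X → ℝ), ∫ x, g i x * f x ∂μ = ∫ x, f x ∂(lam i • μs i) := by
    intro i f
    simpa [smul_eq_mul, hgdef] using
      MeasureTheory.integral_rnDeriv_smul (μ := lam i • μs i) (ν := μ) (hac i) (f := f)
  -- continuous approximating families
  have happrox : ∀ k : ℕ, ∃ h : Fin r → C(X, ℝ), (∀ i x, 0 ≤ h i x) ∧ (∀ x, ∑ i, h i x ≤ 1) ∧
      (∀ i, ∫ x, |h i x - g i x| ∂μ ≤ 1 / (k + 1)) :=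
    fun k => approx_family_aux19 μ r g hgint hg0 hae (1 / (k + 1)) (by positivity)
  choose H hH0 hHsum hHerr using happrox
  have hH1 : ∀ k i x, H k i x ≤ 1 := fun k i x =>
    le_trans (Finset.single_le_sum (f := fun j => H k j x) (fun j _ => hH0 k j x)
      (Finset.mem_univ i)) (hHsum k x)
  -- countable dense family of test functions
  obtain ⟨D, hDc, hDd⟩ := TopologicalSpace.exists_countable_dense C(X, ℝ)
  obtain ⟨e, hDe⟩ := Set.Countable.exists_eq_range hDc hDd.nonempty
  -- diagonal extraction
  letI : PseudoMetricSpace (Fin r → ℕ → ℝ) :=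
    TopologicalSpace.pseudoMetrizableSpacePseudoMetric _
  set a : ℕ → ℕ → Fin r → ℕ → ℝ := fun k n i m => ∫ x, e m x * H k i x ∂(μn n) with hadef
  set bb : ℕ → Fin r → ℕ → ℝ := fun k i m => ∫ x, e m x * H k i x ∂μ with hbbdef
  set cc : Fin r → ℕ → ℝ := fun i m => ∫ x, e m x ∂(lam i • μs i) with hccdef
  have h1 : ∀ k, Tendsto (a k) atTop (nhds (bb k)) := by
    intro k
    rw [tendsto_pi_nhds]; intro i; rw [tendsto_pi_nhds]; intro m
    have := hconv (e m * H k i)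
    simpa [hadef, hbbdef] using this
  have h2 : Tendsto bb atTop (nhds cc) := by
    rw [tendsto_pi_nhds]; intro i; rw [tendsto_pi_nhds]; intro m
    rw [tendsto_iff_dist_tendsto_zero]
    have hbnd : ∀ k : ℕ, dist (bb k i m) (cc i m) ≤ ‖e m‖ * (1 / (k + 1)) := by
      intro k
      have hint1 : Integrable (fun x => e m x * H k i x) μ :=
        (BoundedContinuousFunction.mkOfCompact (e m * H k i)).integrable μ
      have hint2 : Integrable (fun x => e m x * g i x) μ := by
        refine Integrable.bdd_mul (hgint i)
          (c := ‖e m‖) (Continuous.aestronglyMeasurable (e m).continuous) (ae_of_all _ fun x => ?_)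
        exact (e m).norm_coe_le_norm x
      have hcc : cc i m = ∫ x, e m x * g i x ∂μ := by
        rw [hccdef]
        simp only
        rw [← hkey i (e m)]
        congr 1
        ext x
        ring
      have hdiff : bb k i m - cc i m = ∫ x, e m x * (H k i x - g i x) ∂μ := by
        rw [hcc, hbbdef]
        simp only
        rw [← integral_sub hint1 hint2]
        congr 1
        ext x
        ring
      rw [Real.dist_eq, hdiff]
      have habs : |∫ x, e m x * (H k i x - g i x) ∂μ| ≤ ∫ x, ‖e m‖ * |H k i x - g i x| ∂μ := by
        have h1' : |∫ x, e m x * (H k i x - g i x) ∂μ|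
            ≤ ∫ x, |e m x| * |H k i x - g i x| ∂μ := by
          simpa [Real.norm_eq_abs, abs_mul] using
            norm_integral_le_integral_norm (μ := μ) (fun x => e m x * (H k i x - g i x))
        have hintd : Integrable (fun x => |e m x| * |H k i x - g i x|) μ := by
          have hd := (hint1.sub hint2).abs
          simpa [Pi.sub_apply, ← mul_sub, abs_mul] using hd
        refine le_trans h1' (integral_mono hintd ?_ fun x => ?_)
        · exact ((((BoundedContinuousFunction.mkOfCompact (H k i)).integrable μ).sub
            (hgint i)).abs.const_mul _)
        · refine mul_le_mul_of_nonneg_right ?_ (abs_nonneg _)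
          simpa [Real.norm_eq_abs] using (e m).norm_coe_le_norm x
      have hconst : ∫ x, ‖e m‖ * |H k i x - g i x| ∂μ = ‖e m‖ * ∫ x, |H k i x - g i x| ∂μ :=
        integral_const_mul _ _
      have := hHerr k i
      calc |∫ x, e m x * (H k i x - g i x) ∂μ| ≤ ‖e m‖ * ∫ x, |H k i x - g i x| ∂μ := by
            rw [← hconst]; exact habs
      _ ≤ ‖e m‖ * (1 / (k + 1)) := mul_le_mul_of_nonneg_left this (norm_nonneg _)
    refine squeeze_zero (fun k => dist_nonneg) hbnd ?_
    have : Tendsto (fun k : ℕ => 1 / ((k:ℝ) + 1)) atTop (nhds 0) :=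
      tendsto_one_div_add_atTop_nhds_zero_nat
    simpa using this.const_mul (‖e m‖)
  obtain ⟨φ, hφ, hdiag⟩ := diag_aux19 a bb cc h1 h2
  have hdiag' : ∀ (i : Fin r) (m : ℕ),
      Tendsto (fun n => ∫ x, e m x * H (φ n) i x ∂(μn n)) atTop
        (nhds (∫ x, e m x ∂(lam i • μs i))) := by
    intro i m
    exact tendsto_pi_nhds.mp (tendsto_pi_nhds.mp hdiag i) m
  -- the measures
  set A : Fin r → ℕ → Measure X := fun i n =>
    (μn n).withDensity (fun x => ((H (φ n) i x).toNNReal : ℝ≥0∞)) with hAdef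
  have hHmeas : ∀ k i, Measurable (fun x => ((H k i x).toNNReal : ℝ≥0∞)) := fun k i =>
    ((H k i).continuous.measurable.real_toNNReal).coe_nnreal_ennreal
  have hAint : ∀ (i : Fin r) (n : ℕ) (f : X → ℝ),
      ∫ x, f x ∂(A i n) = ∫ x, H (φ n) i x * f x ∂(μn n) := by
    intro i n f
    rw [hAdef]
    simp only
    rw [integral_withDensity_eq_integral_smul ((H (φ n) i).continuous.measurable.real_toNNReal) f]
    congr 1
    ext x
    rw [NNReal.smul_def, smul_eq_mul, Real.coe_toNNReal _ (hH0 (φ n) i x)]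
  have hAmass : ∀ i n, A i n Set.univ ≤ 1 := by
    intro i n
    rw [hAdef]
    simp only
    rw [withDensity_apply _ MeasurableSet.univ, setLIntegral_univ]
    calc ∫⁻ x, ((H (φ n) i x).toNNReal : ℝ≥0∞) ∂(μn n) ≤ ∫⁻ _x, 1 ∂(μn n) := by
          refine lintegral_mono fun x => ?_
          rw [show ((1:ℝ≥0∞)) = ((1:ℝ≥0):ℝ≥0∞) by simp]
          exact ENNReal.coe_le_coe.mpr (Real.toNNReal_le_one.mpr (hH1 (φ n) i x))
    _ = 1 := by simp
  haveI hAfin : ∀ i n, IsFiniteMeasure (A i n) := by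
    intro i n
    constructor
    exact lt_of_le_of_lt (hAmass i n) ENNReal.one_lt_top
  have hlammass : ∀ i, (lam i • μs i) Set.univ ≤ 1 := by
    intro i
    have : lam i ≤ 1 := by
      rw [← hlam_sum]
      exact Finset.single_le_sum (f := fun j => lam j) (fun j _ => zero_le) (Finset.mem_univ i)
    calc (lam i • μs i) Set.univ = (lam i : ℝ≥0∞) := by rw [Measure.smul_apply, measure_univ, ENNReal.smul_def, smul_eq_mul, mul_one]
    _ ≤ 1 := by exact_mod_cast this
  -- weak convergence of A i n to lam i • μs i
  have hAconv : ∀ (i : Fin r) (f : C(X, ℝ)),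
      Tendsto (fun n => ∫ x, f x ∂(A i n)) atTop (nhds (∫ x, f x ∂(lam i • μs i))) := by
    intro i f
    refine dense_ext_aux19 (A i) (fun n => hAfin i n) (fun n => hAmass i n)
      (lam i • μs i) (hlammass i) D hDd ?_ f
    intro q hq
    obtain ⟨m, hm⟩ : ∃ m, e m = q := by
      rw [hDe] at hq
      obtain ⟨m, hm⟩ := hq
      exact ⟨m, hm⟩
    subst hm
    have := hdiag' i m
    refine this.congr fun n => ?_
    rw [hAint i n (e m)]
    congr 1
    ext x
    ring
  -- the remainder measure
  set ρ : ℕ → Measure X := fun n =>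
    (μn n).withDensity (fun x => (((1 - ∑ j, H (φ n) j x).toNNReal : ℝ≥0) : ℝ≥0∞)) with hρdef
  have hρint : ∀ (n : ℕ) (f : X → ℝ),
      ∫ x, f x ∂(ρ n) = ∫ x, (1 - ∑ j, H (φ n) j x) * f x ∂(μn n) := by
    intro n f
    rw [hρdef]
    simp only
    rw [integral_withDensity_eq_integral_smul
      (by exact (continuous_const.sub (continuous_finset_sum _ fun j _ =>
        (H (φ n) j).continuous)).measurable.real_toNNReal :
          Measurable fun x => (1 - ∑ j, H (φ n) j x).toNNReal) f]
    congr 1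
    ext x
    rw [NNReal.smul_def, smul_eq_mul, Real.coe_toNNReal _ (by linarith [hHsum (φ n) x])]
  haveI hρfin : ∀ n, IsFiniteMeasure (ρ n) := by
    intro n
    rw [hρdef]
    refine isFiniteMeasure_withDensity ?_
    refine ne_of_lt (lt_of_le_of_lt ?_ (ENNReal.one_lt_top))
    calc ∫⁻ x, (((1 - ∑ j, H (φ n) j x).toNNReal : ℝ≥0) : ℝ≥0∞) ∂(μn n)
        ≤ ∫⁻ _x, 1 ∂(μn n) := by
          refine lintegral_mono fun x => ?_
          rw [show ((1:ℝ≥0∞)) = ((1:ℝ≥0):ℝ≥0∞) by simp]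
          refine ENNReal.coe_le_coe.mpr (Real.toNNReal_le_one.mpr ?_)
          have := Finset.sum_nonneg (fun j (_ : j ∈ Finset.univ) => hH0 (φ n) j x)
          linarith
    _ = 1 := by simp
  -- total mass of the remainder tends to zero
  have hmassA : ∀ i : Fin r, Tendsto (fun n => ∫ x, H (φ n) i x ∂(μn n)) atTop
      (nhds ((lam i : ℝ))) := by
    intro i
    have := hAconv i (ContinuousMap.const X 1)
    have heq : ∀ n, ∫ x, (ContinuousMap.const X (1:ℝ)) x ∂(A i n) = ∫ x, H (φ n) i x ∂(μn n) := by
      intro n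
      rw [hAint]
      simp
    have heq2 : ∫ x, (ContinuousMap.const X (1:ℝ)) x ∂(lam i • μs i) = (lam i : ℝ) := by
      simp only [ContinuousMap.const_apply]
      rw [ENNReal.smul_def, integral_smul_measure]
      simp
    rw [heq2] at this
    exact this.congr heq
  have htzero : Tendsto (fun n => ∫ x, (1 - ∑ j, H (φ n) j x) ∂(μn n)) atTop (nhds 0) := by
    have hintH : ∀ (n : ℕ) (j : Fin r), Integrable (fun x => H (φ n) j x) (μn n) := fun n j =>
      (BoundedContinuousFunction.mkOfCompact (H (φ n) j)).integrable (μn n)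
    have hint1 : ∀ n, Integrable (fun x => ∑ j, H (φ n) j x) (μn n) := fun n =>
      integrable_finset_sum _ fun j _ => hintH n j
    have heq : ∀ n, ∫ x, (1 - ∑ j, H (φ n) j x) ∂(μn n)
        = 1 - ∑ j, ∫ x, H (φ n) j x ∂(μn n) := by
      intro n
      rw [integral_sub (integrable_const _) (hint1 n), integral_const,
        integral_finset_sum _ fun j _ => hintH n j]
      simp
    have hsumconv : Tendsto (fun n => ∑ j, ∫ x, H (φ n) j x ∂(μn n)) atTop
        (nhds (∑ j, (lam j : ℝ))) := tendsto_finset_sum _ fun j _ => hmassA j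
    have hsum1 : ∑ j, (lam j : ℝ) = 1 := by
      rw [← NNReal.coe_sum, hlam_sum]; simp
    rw [hsum1] at hsumconv
    have := hsumconv.const_sub 1
    simp only [sub_self] at this
    exact Tendsto.congr (fun n => (heq n).symm) this
  have hρzero : ∀ f : C(X, ℝ), Tendsto (fun n => ∫ x, f x ∂(ρ n)) atTop (nhds 0) := by
    intro f
    refine squeeze_zero_norm (fun n => ?_) (by simpa using htzero.const_mul ‖f‖)
    rw [hρint n f]
    have hq0 : ∀ x, 0 ≤ 1 - ∑ j, H (φ n) j x := fun x => by linarith [hHsum (φ n) x]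
    have hint1 : Integrable (fun x => (1 - ∑ j, H (φ n) j x) * f x) (μn n) := by
      refine Integrable.bdd_mul ((BoundedContinuousFunction.mkOfCompact f).integrable (μn n))
        (c := 1) (Continuous.aestronglyMeasurable ?_) (ae_of_all _ fun x => ?_)
      · exact continuous_const.sub (continuous_finset_sum _ fun j _ => (H (φ n) j).continuous)
      · rw [Real.norm_eq_abs, abs_of_nonneg (hq0 x)]
        linarith [Finset.sum_nonneg (fun j (_ : j ∈ Finset.univ) => hH0 (φ n) j x)]
    have hint2 : Integrable (fun x => (1 - ∑ j, H (φ n) j x) * ‖f‖) (μn n) := by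
      refine Integrable.mul_const ?_ _
      exact (integrable_const _).sub
        (integrable_finset_sum _ fun j _ =>
          (BoundedContinuousFunction.mkOfCompact (H (φ n) j)).integrable (μn n))
    have hnorm : ‖∫ x, (1 - ∑ j, H (φ n) j x) * f x ∂(μn n)‖
        ≤ ∫ x, (1 - ∑ j, H (φ n) j x) * ‖f‖ ∂(μn n) := by
      refine le_trans (norm_integral_le_integral_norm _) (integral_mono hint1.norm hint2
        fun x => ?_)
      rw [Real.norm_eq_abs, abs_mul, abs_of_nonneg (hq0 x)]
      exact mul_le_mul_of_nonneg_left (by rw [← Real.norm_eq_abs]; exact f.norm_coe_le_norm x)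
        (hq0 x)
    refine le_trans hnorm ?_
    rw [show (fun x => (1 - ∑ j, H (φ n) j x) * ‖f‖) = fun x => ‖f‖ * (1 - ∑ j, H (φ n) j x) by
      ext x; ring, integral_const_mul]
  -- define the decomposition
  set i0 : Fin r := ⟨0, hr⟩ with hi0def
  set ν : Fin r → ℕ → Measure X := fun i n => A i n + (if i = i0 then ρ n else 0) with hνdef
  refine ⟨ν, ?_, ?_, ?_⟩
  · intro i n
    rw [hνdef]
    simp only
    split_ifs with h
    · infer_instance
    · simp only [add_zero]
      infer_instance
  · intro i f
    have hsplit : ∀ n, ∫ x, f x ∂(ν i n)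
        = ∫ x, f x ∂(A i n) + (if i = i0 then ∫ x, f x ∂(ρ n) else 0) := by
      intro n
      rw [hνdef]
      simp only
      split_ifs with h
      · have hiA : Integrable (fun x => f x) (A i n) :=
          (BoundedContinuousFunction.mkOfCompact f).integrable _
        have hiρ : Integrable (fun x => f x) (ρ n) :=
          (BoundedContinuousFunction.mkOfCompact f).integrable _
        rw [integral_add_measure hiA hiρ]
      · simp
    have hlim : Tendsto (fun n => ∫ x, f x ∂(A i n) + (if i = i0 then ∫ x, f x ∂(ρ n) else 0))
        atTop (nhds (∫ x, f x ∂(lam i • μs i) + 0)) := by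
      refine Tendsto.add (hAconv i f) ?_
      split_ifs with h
      · exact hρzero f
      · exact tendsto_const_nhds
    rw [add_zero] at hlim
    exact Tendsto.congr (fun n => (hsplit n).symm) hlim
  · intro n
    have hsum : ∑ i, ν i n = (∑ i, A i n) + ρ n := by
      rw [hνdef]
      simp only
      rw [Finset.sum_add_distrib]
      congr 1
      simp [Finset.sum_ite_eq' Finset.univ i0]
    rw [hsum]
    have hA : ∑ i, A i n = (μn n).withDensity (fun x => ∑ i, ((H (φ n) i x).toNNReal : ℝ≥0∞)) := by
      rw [hAdef]
      simp only
      rw [withDensity_finset_sum_aux19 (μn n) Finset.univ _ (fun i => hHmeas (φ n) i)]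
    rw [hA, hρdef]
    simp only
    rw [← withDensity_add_left (Finset.measurable_sum _ fun i _ => hHmeas (φ n) i)]
    have hdens : ((fun x => ∑ i, ((H (φ n) i x).toNNReal : ℝ≥0∞))
        + (fun x => (((1 - ∑ j, H (φ n) j x).toNNReal : ℝ≥0) : ℝ≥0∞))) = fun _ => (1 : ℝ≥0∞) := by
      ext x
      simp only [Pi.add_apply]
      have h1 : ∀ i : Fin r, ((((H (φ n) i x).toNNReal : ℝ≥0)) : ℝ≥0∞)
          = ENNReal.ofReal (H (φ n) i x) := fun i => rfl
      have h2 : ((((1 - ∑ j, H (φ n) j x).toNNReal : ℝ≥0)) : ℝ≥0∞)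
          = ENNReal.ofReal (1 - ∑ j, H (φ n) j x) := rfl
      simp only [h1, h2]
      rw [← ENNReal.ofReal_sum_of_nonneg (fun i _ => hH0 (φ n) i x)]
      rw [← ENNReal.ofReal_add (Finset.sum_nonneg fun i _ => hH0 (φ n) i x)
        (by linarith [hHsum (φ n) x])]
      simp
    rw [hdens]
    exact MeasureTheory.withDensity_one

end
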